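/- arXiv:2307.07676 — 2 statements merged into one kernel-verified Lean document; each statement's English description precedes it below -/
import Mathlib

section
/- Let G1=(V1,E1,ℓ1) and G2=(V2,E2,ℓ2) be finite acyclic labeled graphs with single-character vertex labels, and let v1∈V1, v2∈V2 with ℓ1(v1)≠ℓ2(v2). Then L(v1,v2) = max({L(u1,v2) : (u1,v1)∈E1} ∪ {L(v1,u2) : (u2,v2)∈E2} ∪ {0}). -/
open List Relation

section Defs

variable {V V1 V2 V3 α : Type*}

/-- A (directed) path: a nonempty list of vertices, consecutive ones joined by edges. -/
def IsPath (E : V → V → Prop) (p : List V) : Prop :=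
  p ≠ [] ∧ p.Chain' E

/-- Paths ending at `v` (the set `P(v)`). -/
def EndsAt (E : V → V → Prop) (v : V) (p : List V) : Prop :=
  IsPath E p ∧ p.getLast? = some v

/-- A path is left-maximal if its first vertex has no in-coming edges. -/
def LeftMax (E : V → V → Prop) (p : List V) : Prop :=
  ∀ w u, p.head? = some w → ¬ E u w

/-- A path is right-maximal if its last vertex has no out-going edges. -/
def RightMax (E : V → V → Prop) (p : List V) : Prop :=
  ∀ w u, p.getLast? = some w → ¬ E w u

/-- `Subseq(ℓ(P(v)))`: subsequences of label strings of paths ending at `v`. -/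
def SubseqAt (E : V → V → Prop) (ℓ : V → α) (v : V) : Set (List α) :=
  {z | ∃ p, EndsAt E v p ∧ z.Sublist (p.map ℓ)}

/-- `Subseq(ℓ(LMP(v)))`: subsequences of label strings of left-maximal paths ending at `v`. -/
def SubseqLM (E : V → V → Prop) (ℓ : V → α) (v : V) : Set (List α) :=
  {z | ∃ p, EndsAt E v p ∧ LeftMax E p ∧ z.Sublist (p.map ℓ)}

/-- `Subseq(G)`: subsequences of label strings of all paths of `G`. -/
def SubseqG (E : V → V → Prop) (ℓ : V → α) : Set (List α) :=
  {z | ∃ p, IsPath E p ∧ z.Sublist (p.map ℓ)}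

/-- A graph is acyclic if no vertex lies on a nonempty cycle. -/
def Acyclic (E : V → V → Prop) : Prop :=
  ∀ v, ¬ Relation.TransGen E v v

/-- The set `S_IC(v1,v2,v3)`. -/
def SIC (E1 : V1 → V1 → Prop) (ℓ1 : V1 → α) (E2 : V2 → V2 → Prop) (ℓ2 : V2 → α)
    (E3 : V3 → V3 → Prop) (ℓ3 : V3 → α) (v1 : V1) (v2 : V2) (v3 : V3) :
    Set (List α) :=
  {z | (∃ q, EndsAt E3 v3 q ∧ LeftMax E3 q ∧ (q.map ℓ3).Sublist z) ∧
       z ∈ SubseqAt E1 ℓ1 v1 ∧ z ∈ SubseqAt E2 ℓ2 v2}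

/-- Maximum length of a string in `S`, with `⊥` (= −∞) for `S = ∅`. -/
noncomputable def maxLen (S : Set (List α)) : WithBot ℕ :=
  sSup ((fun z : List α => (z.length : WithBot ℕ)) '' S)

/-- `L(v1,v2)`: the maximum length of a common subsequence (as a natural number). -/
noncomputable def Lval (E1 : V1 → V1 → Prop) (ℓ1 : V1 → α)
    (E2 : V2 → V2 → Prop) (ℓ2 : V2 → α) (v1 : V1) (v2 : V2) : ℕ :=
  sSup {n | ∃ z ∈ SubseqAt E1 ℓ1 v1 ∩ SubseqAt E2 ℓ2 v2, n = z.length}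

/-- `D(v1,v2,v3)`: the maximum length of a string in `S_IC(v1,v2,v3)`, `−∞` if empty. -/
noncomputable def Dval (E1 : V1 → V1 → Prop) (ℓ1 : V1 → α) (E2 : V2 → V2 → Prop) (ℓ2 : V2 → α)
    (E3 : V3 → V3 → Prop) (ℓ3 : V3 → α) (v1 : V1) (v2 : V2) (v3 : V3) : WithBot ℕ :=
  maxLen (SIC E1 ℓ1 E2 ℓ2 E3 ℓ3 v1 v2 v3)

end Defs

section Helper

variable {V α : Type*} {E : V → V → Prop} {ℓ : V → α}

lemma chain'_nodup (hac : Acyclic E) {p : List V} (hc : p.Chain' E) : p.Nodup := by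
  rw [List.nodup_iff_sublist]
  intro a ha
  have htc : List.Chain' (Relation.TransGen E) p :=
    List.IsChain.imp (fun _ _ h => Relation.TransGen.single h) hc
  exact hac a (List.isChain_pair.mp (List.IsChain.sublist htc ha))

lemma nil_mem_subseqAt (v : V) : ([] : List α) ∈ SubseqAt E ℓ v :=
  ⟨[v], ⟨⟨by simp, List.isChain_singleton v⟩, by simp⟩, List.nil_sublist _⟩

lemma subseqAt_mono {u v : V} (huv : E u v) : SubseqAt E ℓ u ⊆ SubseqAt E ℓ v := by
  rintro z ⟨p, ⟨⟨hne, hch⟩, hl⟩, hs⟩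
  refine ⟨p ++ [v], ⟨⟨by simp, ?_⟩, by simp⟩, ?_⟩
  · rw [List.Chain', List.isChain_append]
    refine ⟨hch, List.isChain_singleton v, ?_⟩
    intro x hx y hy
    rw [hl] at hx
    simp only [Option.mem_some_iff, List.head?_cons] at hx hy
    rw [← hx, ← hy]; exact huv
  · rw [List.map_append]
    exact hs.trans (List.sublist_append_left _ _)

lemma subseqAt_len_le [Fintype V] (hac : Acyclic E) {v : V} {z : List α}
    (hz : z ∈ SubseqAt E ℓ v) : z.length ≤ Fintype.card V := by
  obtain ⟨p, ⟨⟨_, hch⟩, _⟩, hs⟩ := hz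
  calc z.length ≤ (p.map ℓ).length := hs.length_le
    _ = p.length := by simp
    _ ≤ Fintype.card V := (chain'_nodup hac hch).length_le_card

lemma subseqAt_cases {v : V} {z : List α} (hz : z ∈ SubseqAt E ℓ v) :
    z = [] ∨ (∃ u, E u v ∧ z ∈ SubseqAt E ℓ u) ∨ z.getLast? = some (ℓ v) := by
  obtain ⟨p, ⟨⟨hne, hch⟩, hl⟩, hs⟩ := hz
  have hlast : p.getLast hne = v := by
    rw [List.getLast?_eq_getLast hne] at hl
    exact Option.some_injective _ hl
  have hp : p = p.dropLast ++ [v] := by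
    conv_lhs => rw [← List.dropLast_append_getLast hne, hlast]
  rw [hp, List.map_append] at hs
  obtain ⟨z1, z2, hz12, h1, h2⟩ := List.sublist_append_iff.mp hs
  rcases List.sublist_singleton.mp h2 with h2' | h2'
  · subst h2'; rw [List.append_nil] at hz12; subst hz12
    by_cases hdl : p.dropLast = []
    · left; rw [hdl] at h1; simpa using h1
    · right; left
      refine ⟨p.dropLast.getLast hdl, ?_, ?_⟩
      · rw [hp, List.Chain', List.isChain_append] at hch
        exact hch.2.2 _ (by rw [List.getLast?_eq_getLast hdl]; rfl) v rfl
      · refine ⟨p.dropLast, ⟨⟨hdl, ?_⟩, List.getLast?_eq_getLast hdl⟩, h1⟩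
        rw [hp, List.Chain', List.isChain_append] at hch
        exact hch.1
  · subst h2'; subst hz12
    right; right
    simp

end Helper

/-- For finite acyclic single-character labeled graphs `G1`, `G2`
and vertices `v1, v2` with distinct labels,
`L(v1,v2) = max({L(u1,v2) : (u1,v1) ∈ E1} ∪ {L(v1,u2) : (u2,v2) ∈ E2} ∪ {0})`. -/
theorem stmt2 {V1 V2 α : Type*} [Fintype V1] [Fintype V2]
    (E1 : V1 → V1 → Prop) (ℓ1 : V1 → α) (E2 : V2 → V2 → Prop) (ℓ2 : V2 → α)
    (h1 : Acyclic E1) (h2 : Acyclic E2) (v1 : V1) (v2 : V2)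
    (hlab : ℓ1 v1 ≠ ℓ2 v2) :
    Lval E1 ℓ1 E2 ℓ2 v1 v2 =
      sSup (insert 0
        ({n | ∃ u1, E1 u1 v1 ∧ n = Lval E1 ℓ1 E2 ℓ2 u1 v2} ∪
         {n | ∃ u2, E2 u2 v2 ∧ n = Lval E1 ℓ1 E2 ℓ2 v1 u2})) := by
  -- abbreviations
  set T : Set ℕ := insert 0
      ({n | ∃ u1, E1 u1 v1 ∧ n = Lval E1 ℓ1 E2 ℓ2 u1 v2} ∪
       {n | ∃ u2, E2 u2 v2 ∧ n = Lval E1 ℓ1 E2 ℓ2 v1 u2}) with hT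
  have hSne : ∀ (a : V1) (b : V2),
      Set.Nonempty {n | ∃ z ∈ SubseqAt E1 ℓ1 a ∩ SubseqAt E2 ℓ2 b, n = z.length} :=
    fun a b => ⟨0, [], ⟨nil_mem_subseqAt a, nil_mem_subseqAt b⟩, rfl⟩
  have hSbdd : ∀ (a : V1) (b : V2),
      BddAbove {n | ∃ z ∈ SubseqAt E1 ℓ1 a ∩ SubseqAt E2 ℓ2 b, n = z.length} := by
    intro a b
    exact ⟨Fintype.card V1, by rintro n ⟨z, ⟨hz1, _⟩, rfl⟩; exact subseqAt_len_le h1 hz1⟩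
  have hLle : ∀ (a : V1) (b : V2), Lval E1 ℓ1 E2 ℓ2 a b ≤ Fintype.card V1 := by
    intro a b
    exact csSup_le (hSne a b) (by rintro n ⟨z, ⟨hz1, _⟩, rfl⟩; exact subseqAt_len_le h1 hz1)
  have hTbdd : BddAbove T := by
    refine ⟨Fintype.card V1, ?_⟩
    rintro n (rfl | ⟨u1, _, rfl⟩ | ⟨u2, _, rfl⟩)
    · exact Nat.zero_le _
    · exact hLle u1 v2
    · exact hLle v1 u2
  apply _root_.le_antisymm
  · -- Lval v1 v2 ≤ sSup T
    refine csSup_le (hSne v1 v2) ?_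
    rintro n ⟨z, ⟨hz1, hz2⟩, rfl⟩
    rcases subseqAt_cases hz1 with rfl | ⟨u1, hu1, hmem1⟩ | hlast1
    · simpa using le_csSup hTbdd (Set.mem_insert 0 _)
    · have h1' : z.length ≤ Lval E1 ℓ1 E2 ℓ2 u1 v2 :=
        le_csSup (hSbdd u1 v2) ⟨z, ⟨hmem1, hz2⟩, rfl⟩
      exact h1'.trans (le_csSup hTbdd (Set.mem_insert_iff.mpr
        (Or.inr (Or.inl ⟨u1, hu1, rfl⟩))))
    · rcases subseqAt_cases hz2 with rfl | ⟨u2, hu2, hmem2⟩ | hlast2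
      · simpa using le_csSup hTbdd (Set.mem_insert 0 _)
      · have h2' : z.length ≤ Lval E1 ℓ1 E2 ℓ2 v1 u2 :=
          le_csSup (hSbdd v1 u2) ⟨z, ⟨hz1, hmem2⟩, rfl⟩
        exact h2'.trans (le_csSup hTbdd (Set.mem_insert_iff.mpr
          (Or.inr (Or.inr ⟨u2, hu2, rfl⟩))))
      · rw [hlast1] at hlast2
        exact absurd (Option.some_injective _ hlast2) hlab
  · -- sSup T ≤ Lval v1 v2
    refine csSup_le ⟨0, Set.mem_insert 0 _⟩ ?_
    rintro n (rfl | ⟨u1, hu1, rfl⟩ | ⟨u2, hu2, rfl⟩)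
    · exact Nat.zero_le _
    · refine csSup_le (hSne u1 v2) ?_
      rintro m ⟨z, ⟨ha, hb⟩, rfl⟩
      exact le_csSup (hSbdd v1 v2) ⟨z, ⟨subseqAt_mono hu1 ha, hb⟩, rfl⟩
    · refine csSup_le (hSne v1 u2) ?_
      rintro m ⟨z, ⟨ha, hb⟩, rfl⟩
      exact le_csSup (hSbdd v1 v2) ⟨z, ⟨ha, subseqAt_mono hu2 hb⟩, rfl⟩
end

section
/- Let G1=(V1,E1,ℓ1), G2=(V2,E2,ℓ2), G3=(V3,E3,ℓ3) be finite acyclic labeled graphs with single-character vertex labels, and let v1∈V1, v2∈V2, v3∈V3 with ℓ1(v1)=ℓ2(v2)≠ℓ3(v3). If v1 and v2 each have at least one in-coming edge, then D(v1,v2,v3) = 1 + max{ D(u1,u2,v3) : (u1,v1)∈E1, (u2,v2)∈E2 } (with the conventions −∞+1=−∞ and max over values that may include −∞). -/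
open List Relation

section Aux

open List

variable {V α : Type*}

private lemma chain_transGen {E : V → V → Prop} :
    ∀ {l : List V} {a : V}, List.Chain E a l → ∀ b ∈ l, Relation.TransGen E a b := by
  intro l
  induction l with
  | nil => intro a _ b hb; simp at hb
  | cons c l ih =>
    intro a h b hb
    replace h : E a c ∧ List.Chain E c l := List.isChain_cons_cons.mp h
    rcases List.mem_cons.mp hb with rfl | hb
    · exact Relation.TransGen.single h.1
    · exact (Relation.TransGen.single h.1).trans (ih h.2 b hb)

private lemma nodup_of_chain' {E : V → V → Prop} (hE : Acyclic E) :
    ∀ {l : List V}, l.Chain' E → l.Nodup := by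
  intro l
  induction l with
  | nil => intro _; simp
  | cons a l ih =>
    intro h
    have hc : List.Chain E a l := h
    rw [List.nodup_cons]
    refine ⟨fun hm => hE a (chain_transGen hc a hm), ih (List.IsChain.tail (l := a :: l) h)⟩

private lemma subseqAt_length_le {E : V → V → Prop} {ℓ : V → α} [Fintype V] (hE : Acyclic E)
    {v : V} {z : List α} (hz : z ∈ SubseqAt E ℓ v) : z.length ≤ Fintype.card V := by
  obtain ⟨p, hp, hsub⟩ := hz
  calc z.length ≤ (p.map ℓ).length := hsub.length_le
    _ = p.length := by simp
    _ ≤ _ := (nodup_of_chain' hE hp.1.2).length_le_card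

private lemma drop_mismatched_last {z w : List α} {a : α}
    (h : w <+ z ++ [a]) (hw : w ≠ []) (hlast : w.getLast? ≠ some a) : w <+ z := by
  obtain ⟨b, t, hbt⟩ : ∃ b t, w.reverse = b :: t := by
    cases hr : w.reverse with
    | nil => exact absurd (by simpa using hr) hw
    | cons b t => exact ⟨b, t, rfl⟩
  have hb : b ≠ a := by
    intro hba
    apply hlast
    rw [← List.head?_reverse, hbt]
    simp [hba]
  have h' : b :: t <+ a :: z.reverse := by
    have := h.reverse
    rw [hbt] at this; simpa using this
  have h2 : b :: t <+ z.reverse := by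
    cases h' with
    | cons _ h'' => exact h''
    | cons_cons => exact absurd rfl hb
  have h3 : w.reverse <+ z.reverse := hbt ▸ h2
  simpa using h3.reverse

private lemma subseqAt_snoc {E : V → V → Prop} {ℓ : V → α} {u v : V} {z : List α}
    (huv : E u v) (hz : z ∈ SubseqAt E ℓ u) : z ++ [ℓ v] ∈ SubseqAt E ℓ v := by
  obtain ⟨p, ⟨⟨hne, hch⟩, hlast⟩, hsub⟩ := hz
  refine ⟨p ++ [v], ⟨⟨by simp, ?_⟩, by simp⟩, ?_⟩
  · apply List.isChain_append.mpr
    refine ⟨hch, List.isChain_singleton v, ?_⟩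
    intro x hx y hy
    simp only [List.head?_cons, Option.mem_some_iff] at hy
    rw [hlast] at hx
    simp only [Option.mem_some_iff] at hx
    subst hx; subst hy
    exact huv
  · simpa using hsub.append (List.Sublist.refl [ℓ v])

private lemma subseqAt_peel {E : V → V → Prop} {ℓ : V → α} {v : V} {z : List α}
    (hz : z ++ [ℓ v] ∈ SubseqAt E ℓ v) (hzne : z ≠ []) :
    ∃ u, E u v ∧ z ∈ SubseqAt E ℓ u := by
  obtain ⟨p, ⟨⟨hne, hch⟩, hlast⟩, hsub⟩ := hz
  have hgl : p.getLast hne = v := by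
    rw [List.getLast?_eq_getLast hne] at hlast
    exact Option.some_injective _ hlast
  have hp : p = p.dropLast ++ [v] := by
    conv_lhs => rw [← List.dropLast_append_getLast hne]
    rw [hgl]
  have hsub' : z ++ [ℓ v] <+ (p.dropLast.map ℓ) ++ [ℓ v] := by
    rw [hp] at hsub; simpa using hsub
  have hzsub : z <+ p.dropLast.map ℓ := by simpa using hsub'
  have hdne : p.dropLast ≠ [] := by
    intro hd
    rw [hd] at hzsub
    simp only [List.map_nil, List.sublist_nil] at hzsub
    exact hzne hzsub
  refine ⟨p.dropLast.getLast hdne, ?_, ?_⟩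
  · have hch' := hch
    rw [hp] at hch'; replace hch' := List.isChain_append.mp hch'
    exact hch'.2.2 _ (by rw [List.getLast?_eq_getLast hdne]; rfl) v rfl
  · refine ⟨p.dropLast, ⟨⟨hdne, ?_⟩, List.getLast?_eq_getLast hdne⟩, hzsub⟩
    have hch' := hch
    rw [hp] at hch'; replace hch' := List.isChain_append.mp hch'
    exact hch'.1

private lemma subseqAt_of_ne_last {E : V → V → Prop} {ℓ : V → α} {v : V} {z : List α}
    (hz : z ∈ SubseqAt E ℓ v) (hzne : z ≠ []) (hnl : z.getLast? ≠ some (ℓ v)) :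
    z ++ [ℓ v] ∈ SubseqAt E ℓ v := by
  obtain ⟨p, ⟨⟨hne, hch⟩, hlast⟩, hsub⟩ := hz
  have hgl : p.getLast hne = v := by
    rw [List.getLast?_eq_getLast hne] at hlast
    exact Option.some_injective _ hlast
  have hp : p = p.dropLast ++ [v] := by
    conv_lhs => rw [← List.dropLast_append_getLast hne]
    rw [hgl]
  have hsub' : z <+ (p.dropLast.map ℓ) ++ [ℓ v] := by
    rw [hp] at hsub; simpa using hsub
  have hzsub : z <+ p.dropLast.map ℓ := drop_mismatched_last hsub' hzne hnl
  refine ⟨p, ⟨⟨hne, hch⟩, hlast⟩, ?_⟩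
  rw [hp]
  simpa using hzsub.append (List.Sublist.refl [ℓ v])

private lemma wb_sSup_le {X : Set (WithBot ℕ)} {c : WithBot ℕ}
    (h : ∀ x ∈ X, x ≤ c) : sSup X ≤ c := by
  rcases X.eq_empty_or_nonempty with rfl | hne
  · rw [WithBot.sSup_empty]; exact bot_le
  · exact csSup_le hne h

private lemma wb_sSup_mem {X : Set (WithBot ℕ)} (hne : X.Nonempty) (hbdd : BddAbove X) :
    sSup X ∈ X := by
  by_cases hb : ∃ n : ℕ, (n : WithBot ℕ) ∈ X
  · obtain ⟨n0, hn0⟩ := hb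
    set N : Set ℕ := {n | (n : WithBot ℕ) ∈ X} with hN
    have hNne : N.Nonempty := ⟨n0, hn0⟩
    have hNb : BddAbove N := by
      obtain ⟨c, hc⟩ := hbdd
      induction c using WithBot.recBotCoe with
      | bot => exact absurd (hc hn0) (by simp)
      | coe m => exact ⟨m, fun n hn => WithBot.coe_le_coe.mp (hc hn)⟩
    have hmem := Nat.sSup_mem hNne hNb
    have heq : sSup X = ((sSup N : ℕ) : WithBot ℕ) := by
      apply _root_.le_antisymm
      · apply csSup_le hne
        intro x hx
        induction x using WithBot.recBotCoe with
        | bot => exact bot_le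
        | coe k => exact WithBot.coe_le_coe.mpr (le_csSup hNb hx)
      · exact le_csSup hbdd hmem
    rw [heq]; exact hmem
  · obtain ⟨x, hx⟩ := id hne
    have hxb : x = ⊥ := by
      induction x using WithBot.recBotCoe with
      | bot => rfl
      | coe n => exact absurd ⟨n, hx⟩ hb
    have hle : sSup X ≤ ⊥ := csSup_le hne (fun y hy => by
      induction y using WithBot.recBotCoe with
      | bot => exact le_refl _
      | coe n => exact absurd ⟨n, hy⟩ hb)
    rw [le_bot_iff.mp hle]
    rwa [hxb] at hx

end Aux

section Main

variable {V1 V2 V3 α : Type*}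

private lemma q_facts {E3 : V3 → V3 → Prop} {ℓ3 : V3 → α} {v3 : V3} {q : List V3}
    (hq : EndsAt E3 v3 q) :
    q.map ℓ3 ≠ [] ∧ (q.map ℓ3).getLast? = some (ℓ3 v3) := by
  obtain ⟨⟨hne, _⟩, hlast⟩ := hq
  constructor
  · simpa using hne
  · rw [List.getLast?_map, hlast]; rfl

/-- Extension: from a member of `SIC(u1,u2,v3)` and edges to `v1, v2`, get a longer
member of `SIC(v1,v2,v3)`. -/
private lemma sic_extend {E1 : V1 → V1 → Prop} {ℓ1 : V1 → α} {E2 : V2 → V2 → Prop} {ℓ2 : V2 → α}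
    {E3 : V3 → V3 → Prop} {ℓ3 : V3 → α} {v1 u1 : V1} {v2 u2 : V2} {v3 : V3}
    (hl12 : ℓ1 v1 = ℓ2 v2) (he1 : E1 u1 v1) (he2 : E2 u2 v2) {z : List α}
    (hz : z ∈ SIC E1 ℓ1 E2 ℓ2 E3 ℓ3 u1 u2 v3) :
    z ++ [ℓ1 v1] ∈ SIC E1 ℓ1 E2 ℓ2 E3 ℓ3 v1 v2 v3 := by
  obtain ⟨⟨q, hq3, hqlm, hqsub⟩, hz1, hz2⟩ := hz
  refine ⟨⟨q, hq3, hqlm, hqsub.trans (List.sublist_append_left z [ℓ1 v1])⟩, ?_, ?_⟩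
  · exact subseqAt_snoc he1 hz1
  · rw [hl12]; exact subseqAt_snoc he2 hz2

/-- Peeling: a member of `SIC(v1,v2,v3)` that ends with `ℓ1 v1` yields a member of some
`SIC(u1,u2,v3)` one character shorter. -/
private lemma sic_peel {E1 : V1 → V1 → Prop} {ℓ1 : V1 → α} {E2 : V2 → V2 → Prop} {ℓ2 : V2 → α}
    {E3 : V3 → V3 → Prop} {ℓ3 : V3 → α} {v1 : V1} {v2 : V2} {v3 : V3}
    (hl12 : ℓ1 v1 = ℓ2 v2) (hl3 : ℓ2 v2 ≠ ℓ3 v3) {z : List α}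
    (hz : z ∈ SIC E1 ℓ1 E2 ℓ2 E3 ℓ3 v1 v2 v3) (hlastz : z.getLast? = some (ℓ1 v1)) :
    ∃ u1 u2, E1 u1 v1 ∧ E2 u2 v2 ∧
      z.dropLast ∈ SIC E1 ℓ1 E2 ℓ2 E3 ℓ3 u1 u2 v3 ∧ z = z.dropLast ++ [ℓ1 v1] := by
  obtain ⟨⟨q, hq3, hqlm, hqsub⟩, hz1, hz2⟩ := hz
  obtain ⟨hqne, hqlast⟩ := q_facts hq3
  have hzne : z ≠ [] := by
    intro h; rw [h] at hlastz; simp at hlastz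
  have hzeq : z = z.dropLast ++ [ℓ1 v1] := by
    conv_lhs => rw [← List.dropLast_append_getLast hzne]
    congr 1
    rw [List.getLast?_eq_getLast hzne] at hlastz
    rw [Option.some_injective _ hlastz]
  have hqsub' : q.map ℓ3 <+ z.dropLast := by
    apply drop_mismatched_last (hzeq ▸ hqsub) hqne
    rw [hqlast]
    intro h
    exact hl3 (hl12 ▸ (Option.some_injective _ h).symm)
  have hdne : z.dropLast ≠ [] := by
    intro h
    rw [h] at hqsub'
    simp only [List.sublist_nil] at hqsub'
    exact hqne hqsub'
  obtain ⟨u1, he1, hz1'⟩ := subseqAt_peel (hzeq ▸ hz1) hdne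
  obtain ⟨u2, he2, hz2'⟩ := subseqAt_peel (show z.dropLast ++ [ℓ2 v2] ∈ SubseqAt E2 ℓ2 v2 from
    by rw [← hl12]; exact hzeq ▸ hz2) hdne
  exact ⟨u1, u2, he1, he2, ⟨⟨q, hq3, hqlm, hqsub'⟩, hz1', hz2'⟩, hzeq⟩

/-- The step lemma: every member of `SIC(v1,v2,v3)` is at most one longer than some
member of `SIC(u1,u2,v3)` over incoming edges. -/
private lemma sic_step {E1 : V1 → V1 → Prop} {ℓ1 : V1 → α} {E2 : V2 → V2 → Prop} {ℓ2 : V2 → α}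
    {E3 : V3 → V3 → Prop} {ℓ3 : V3 → α} {v1 : V1} {v2 : V2} {v3 : V3}
    (hl12 : ℓ1 v1 = ℓ2 v2) (hl3 : ℓ2 v2 ≠ ℓ3 v3) {z : List α}
    (hz : z ∈ SIC E1 ℓ1 E2 ℓ2 E3 ℓ3 v1 v2 v3) :
    ∃ u1 u2 z', E1 u1 v1 ∧ E2 u2 v2 ∧
      z' ∈ SIC E1 ℓ1 E2 ℓ2 E3 ℓ3 u1 u2 v3 ∧ z.length ≤ z'.length + 1 := by
  by_cases hcase : z.getLast? = some (ℓ1 v1)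
  · obtain ⟨u1, u2, he1, he2, hmem, hzeq⟩ := sic_peel hl12 hl3 hz hcase
    refine ⟨u1, u2, z.dropLast, he1, he2, hmem, ?_⟩
    conv_lhs => rw [hzeq]
    simp
  · obtain ⟨⟨q, hq3, hqlm, hqsub⟩, hz1, hz2⟩ := hz
    obtain ⟨hqne, hqlast⟩ := q_facts hq3
    have hzne : z ≠ [] := by
      intro h
      rw [h] at hqsub
      simp only [List.sublist_nil] at hqsub
      exact hqne hqsub
    have hmem : z ++ [ℓ1 v1] ∈ SIC E1 ℓ1 E2 ℓ2 E3 ℓ3 v1 v2 v3 := by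
      refine ⟨⟨q, hq3, hqlm, hqsub.trans (List.sublist_append_left z [ℓ1 v1])⟩, ?_, ?_⟩
      · exact subseqAt_of_ne_last hz1 hzne hcase
      · rw [hl12]
        exact subseqAt_of_ne_last hz2 hzne (by rw [← hl12]; exact hcase)
    obtain ⟨u1, u2, he1, he2, hmem', _⟩ := sic_peel hl12 hl3 hmem (by simp)
    rw [List.dropLast_concat] at hmem'
    exact ⟨u1, u2, z, he1, he2, hmem', Nat.le_succ _⟩

end Main

/-- In finite acyclic graphs with `ℓ1(v1) = ℓ2(v2) ≠ ℓ3(v3)`: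
if `v1` and `v2` each have an in-coming edge, then
`D(v1,v2,v3) = 1 + max{ D(u1,u2,v3) : (u1,v1) ∈ E1, (u2,v2) ∈ E2 }`
(with the convention `−∞ + 1 = −∞`). -/
theorem stmt12 {V1 V2 V3 α : Type*} [Fintype V1] [Fintype V2] [Fintype V3]
    (E1 : V1 → V1 → Prop) (ℓ1 : V1 → α) (E2 : V2 → V2 → Prop) (ℓ2 : V2 → α)
    (E3 : V3 → V3 → Prop) (ℓ3 : V3 → α)
    (h1 : Acyclic E1) (h2 : Acyclic E2) (h3 : Acyclic E3)
    (v1 : V1) (v2 : V2) (v3 : V3)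
    (hl12 : ℓ1 v1 = ℓ2 v2) (hl3 : ℓ2 v2 ≠ ℓ3 v3)
    (hv1 : ∃ u, E1 u v1) (hv2 : ∃ u, E2 u v2) :
    Dval E1 ℓ1 E2 ℓ2 E3 ℓ3 v1 v2 v3 =
      1 + sSup {d : WithBot ℕ | ∃ u1 u2, E1 u1 v1 ∧ E2 u2 v2 ∧
        d = Dval E1 ℓ1 E2 ℓ2 E3 ℓ3 u1 u2 v3} := by
  classical
  have hbddI : ∀ (u1 : V1) (u2 : V2) (u3 : V3), BddAbove
      ((fun z : List α => (z.length : WithBot ℕ)) '' SIC E1 ℓ1 E2 ℓ2 E3 ℓ3 u1 u2 u3) := by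
    intro u1 u2 u3
    refine ⟨(Fintype.card V1 : ℕ), ?_⟩
    rintro x ⟨z, hz, rfl⟩
    show (z.length : WithBot ℕ) ≤ ((Fintype.card V1 : ℕ) : WithBot ℕ)
    exact_mod_cast subseqAt_length_le h1 hz.2.1
  set T := {d : WithBot ℕ | ∃ u1 u2, E1 u1 v1 ∧ E2 u2 v2 ∧
      d = Dval E1 ℓ1 E2 ℓ2 E3 ℓ3 u1 u2 v3} with hT
  have hTbdd : BddAbove T := by
    refine ⟨(Fintype.card V1 : ℕ), ?_⟩
    rintro d ⟨u1, u2, _, _, rfl⟩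
    apply wb_sSup_le
    rintro x ⟨z, hz, rfl⟩
    show (z.length : WithBot ℕ) ≤ ((Fintype.card V1 : ℕ) : WithBot ℕ)
    exact_mod_cast subseqAt_length_le h1 hz.2.1
  apply _root_.le_antisymm
  · apply wb_sSup_le
    rintro x ⟨z, hz, rfl⟩
    obtain ⟨u1, u2, z', he1, he2, hz', hlen⟩ := sic_step hl12 hl3 hz
    have ha : (z'.length : WithBot ℕ) ≤ Dval E1 ℓ1 E2 ℓ2 E3 ℓ3 u1 u2 v3 :=
      le_csSup (hbddI u1 u2 v3) ⟨z', hz', rfl⟩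
    have hb : Dval E1 ℓ1 E2 ℓ2 E3 ℓ3 u1 u2 v3 ≤ sSup T :=
      le_csSup hTbdd ⟨u1, u2, he1, he2, rfl⟩
    calc (z.length : WithBot ℕ) ≤ ((z'.length + 1 : ℕ) : WithBot ℕ) := by exact_mod_cast hlen
      _ = 1 + (z'.length : WithBot ℕ) := by push_cast; ring
      _ ≤ 1 + sSup T := add_le_add_right (ha.trans hb) 1
  · have hTne : T.Nonempty := by
      obtain ⟨u1, he1⟩ := hv1
      obtain ⟨u2, he2⟩ := hv2
      exact ⟨_, u1, u2, he1, he2, rfl⟩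
    obtain ⟨u1, u2, he1, he2, hd⟩ := wb_sSup_mem hTne hTbdd
    rw [hd]
    rcases Set.eq_empty_or_nonempty (SIC E1 ℓ1 E2 ℓ2 E3 ℓ3 u1 u2 v3) with hS | hS
    · have : Dval E1 ℓ1 E2 ℓ2 E3 ℓ3 u1 u2 v3 = ⊥ := by
        show sSup _ = ⊥
        rw [hS]
        simpa using WithBot.sSup_empty
      rw [this]
      simp
    · have hIne : ((fun z : List α => (z.length : WithBot ℕ)) ''
          SIC E1 ℓ1 E2 ℓ2 E3 ℓ3 u1 u2 v3).Nonempty := hS.image _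
      obtain ⟨z, hzmem, hzlen⟩ := wb_sSup_mem hIne (hbddI u1 u2 v3)
      have hDeq : Dval E1 ℓ1 E2 ℓ2 E3 ℓ3 u1 u2 v3 = (z.length : WithBot ℕ) := hzlen.symm
      rw [hDeq]
      have hext := sic_extend hl12 he1 he2 hzmem
      have : ((z.length + 1 : ℕ) : WithBot ℕ) ≤ Dval E1 ℓ1 E2 ℓ2 E3 ℓ3 v1 v2 v3 :=
        le_csSup (hbddI v1 v2 v3) ⟨z ++ [ℓ1 v1], hext, by simp⟩
      calc (1 : WithBot ℕ) + (z.length : WithBot ℕ) = ((z.length + 1 : ℕ) : WithBot ℕ) := by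
            push_cast; ring
        _ ≤ _ := this
end
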